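/- Let X be a Banach space. The sets [F,Y]_ε (for ε > 0, F a finite-dimensional subspace of X, Y a closed subspace of X with F ⊆ Y) form a basis for a topology on the set Sub(X) of closed subspaces of X. Moreover, for Y ∈ Sub(X), the sets [F,Y]_ε with F ⊆ Y finite-dimensional and ε > 0 form a neighborhood basis of Y in this topology. -/

import Mathlib

set_option synthInstance.maxHeartbeats 1000000
set_option maxHeartbeats 1000000


/-- The set of closed linear subspaces of a normed space. -/
def ClosedSub (E : Type) [NormedAddCommGroup E] [NormedSpace ℝ E] :=
  {Y : Submodule ℝ E // IsClosed (Y : Set E)}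

/-- The basic set `[F, Y]_ε` of the Ellentuck topology: the set of closed subspaces `Z`
for which there exist a closed subspace `Z'` with `F ⊆ Z' ⊆ Y` and an isomorphism
`T : Z' → Z` with `‖T - Id_{Z'}‖ < ε`. -/
def ellSet (E : Type) [NormedAddCommGroup E] [NormedSpace ℝ E]
    (F Y : Submodule ℝ E) (ε : ℝ) : Set (ClosedSub E) :=
  {Z | ∃ Z' : Submodule ℝ E, IsClosed (Z' : Set E) ∧ F ≤ Z' ∧ Z' ≤ Y ∧
    ∃ T : ↥Z' ≃L[ℝ] ↥Z.1,
      ‖Z.1.subtypeL.comp (T : ↥Z' →L[ℝ] ↥Z.1) - Z'.subtypeL‖ < ε}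

/-- The collection of all basic sets `[F, Y]_ε` with `F` finite-dimensional,
`Y` closed with `F ⊆ Y`, and `ε > 0`. -/
def ellBasis (E : Type) [NormedAddCommGroup E] [NormedSpace ℝ E] :
    Set (Set (ClosedSub E)) :=
  {S | ∃ (F Y : Submodule ℝ E) (ε : ℝ), FiniteDimensional ℝ F ∧ IsClosed (Y : Set E) ∧
    F ≤ Y ∧ 0 < ε ∧ S = ellSet E F Y ε}

/-- The Ellentuck topology on `Sub(E)`, generated by the sets `[F, Y]_ε`. -/
def ellTop (E : Type) [NormedAddCommGroup E] [NormedSpace ℝ E] :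
    TopologicalSpace (ClosedSub E) :=
  TopologicalSpace.generateFrom (ellBasis E)

lemma mem_ellSet_self {E : Type} [NormedAddCommGroup E] [NormedSpace ℝ E]
    (Y : ClosedSub E) (F : Submodule ℝ E) (hF : F ≤ Y.1) {ε : ℝ} (hε : 0 < ε) :
    Y ∈ ellSet E F Y.1 ε := by
  refine ⟨Y.1, Y.2, hF, le_rfl, ContinuousLinearEquiv.refl ℝ ↥Y.1, ?_⟩
  have h0 : Y.1.subtypeL.comp ((ContinuousLinearEquiv.refl ℝ ↥Y.1 : ↥Y.1 ≃L[ℝ] ↥Y.1) :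
      ↥Y.1 →L[ℝ] ↥Y.1) - Y.1.subtypeL = 0 := by
    ext x; simp
  rw [h0]
  rw [ContinuousLinearMap.opNorm_zero]; exact hε

lemma ellSet_mono {E : Type} [NormedAddCommGroup E] [NormedSpace ℝ E]
    {F1 F2 Y : Submodule ℝ E} {ε1 ε2 : ℝ} (hF : F1 ≤ F2) (hε : ε2 ≤ ε1) :
    ellSet E F2 Y ε2 ⊆ ellSet E F1 Y ε1 := by
  rintro Z ⟨Z', hc, h1, h2, T, hT⟩
  exact ⟨Z', hc, le_trans hF h1, h2, T, lt_of_lt_of_le hT hε⟩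

lemma ell_refine {E : Type} [NormedAddCommGroup E] [NormedSpace ℝ E]
    {F0 Y0 : Submodule ℝ E} {ε0 : ℝ} (hF0 : FiniteDimensional ℝ F0)
    (Y : ClosedSub E) (hY : Y ∈ ellSet E F0 Y0 ε0) :
    ∃ (F : Submodule ℝ E) (ε : ℝ), FiniteDimensional ℝ F ∧ F ≤ Y.1 ∧ 0 < ε ∧
      ellSet E F Y.1 ε ⊆ ellSet E F0 Y0 ε0 := by
  obtain ⟨Z', hZ'c, hF0Z, hZY0, T, hT⟩ := hY
  set Tc : ↥Z' →L[ℝ] ↥Y.1 := (T : ↥Z' →L[ℝ] ↥Y.1) with hTc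
  set fL : ↥Z' →L[ℝ] E := Y.1.subtypeL.comp Tc with hfL
  set δ : ℝ := ‖Y.1.subtypeL.comp Tc - Z'.subtypeL‖ with hδ
  have hδ0 : 0 ≤ δ := hδ ▸ ContinuousLinearMap.opNorm_nonneg _
  have hδε0 : δ < ε0 := hT
  set C : ℝ := ‖fL‖ with hC
  have hC0 : 0 ≤ C := hC ▸ ContinuousLinearMap.opNorm_nonneg _
  set ε : ℝ := (ε0 - δ) / (C + 1) with hε
  have hε0' : 0 < ε := div_pos (by linarith) (by linarith)
  set F : Submodule ℝ E := (F0.comap Z'.subtype).map (fL : ↥Z' →ₗ[ℝ] E) with hF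
  have hFfd : FiniteDimensional ℝ F := by
    haveI : FiniteDimensional ℝ (F0.comap Z'.subtype) :=
      (Submodule.comapSubtypeEquivOfLe hF0Z).symm.finiteDimensional
    exact Module.Finite.map _ _
  have hFY : F ≤ Y.1 := by
    rintro x ⟨y, _, rfl⟩
    exact (Tc y).2
  refine ⟨F, ε, hFfd, hFY, hε0', ?_⟩
  rintro Z ⟨W', hW'c, hFW, hWY, S, hS⟩
  set Sc : ↥W' →L[ℝ] ↥Z.1 := (S : ↥W' →L[ℝ] ↥Z.1) with hSc
  set η : ℝ := ‖Z.1.subtypeL.comp Sc - W'.subtypeL‖ with hη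
  have hη0 : 0 ≤ η := hη ▸ ContinuousLinearMap.opNorm_nonneg _
  have hηε : η < ε := hS
  -- the subspace Z'' = Z' ∩ (ι T)⁻¹ W', as a submodule of E
  set pre : Submodule ℝ ↥Z' := W'.comap (fL : ↥Z' →ₗ[ℝ] E) with hpre
  set Z'' : Submodule ℝ E := pre.map Z'.subtype with hZ''
  have hZ''Z' : Z'' ≤ Z' := Submodule.map_subtype_le _ _
  have hZ''c : IsClosed (Z'' : Set E) := by
    have : (Z'' : Set E) = Subtype.val '' (fL ⁻¹' (W' : Set E)) := by
      ext x
      simp [hZ'', hpre, Submodule.mem_map, Set.mem_image]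
    rw [this]
    exact (hZ'c.isClosedEmbedding_subtypeVal).isClosedMap _
      (hW'c.preimage fL.continuous)
  have hF0Z'' : F0 ≤ Z'' := by
    intro x hx
    refine ⟨⟨x, hF0Z hx⟩, ?_, rfl⟩
    have : fL ⟨x, hF0Z hx⟩ ∈ F := ⟨⟨x, hF0Z hx⟩, hx, rfl⟩
    exact hFW this
  -- inclusion of Z'' into Z'
  set j : ↥Z'' →ₗ[ℝ] ↥Z' := Submodule.inclusion hZ''Z' with hj
  have hjmem : ∀ x : ↥Z'', fL (j x) ∈ W' := by
    intro x
    obtain ⟨y, hy, hyx⟩ := x.2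
    have : j x = y := Subtype.ext (by simp [hj]; exact hyx.symm)
    rw [this]; exact hy
  set k : ↥Z'' →ₗ[ℝ] ↥W' :=
    LinearMap.codRestrict W' ((fL : ↥Z' →ₗ[ℝ] E).comp j) hjmem with hk
  have hkval : ∀ x : ↥Z'', (k x : E) = fL (j x) := fun x => rfl
  set G : ↥Z'' →ₗ[ℝ] ↥Z.1 := (S.toLinearEquiv : ↥W' →ₗ[ℝ] ↥Z.1).comp k with hG
  have hGval : ∀ x : ↥Z'', G x = S (k x) := fun x => rfl
  have hfLinj : Function.Injective fL := by
    intro a b hab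
    have : (T a : ↥Y.1) = T b := Subtype.ext (by simpa [hfL, hTc] using hab)
    exact T.injective this
  have hGinj : Function.Injective G := by
    intro a b hab
    have h1 : S (k a) = S (k b) := hab
    have h2 : k a = k b := S.injective h1
    have h3 : fL (j a) = fL (j b) := by rw [← hkval, ← hkval, h2]
    have h4 : j a = j b := hfLinj h3
    exact Subtype.ext (show (a : E) = (b : E) from congrArg (Subtype.val : ↥Z' → E) h4)
  have hGsurj : Function.Surjective G := by
    intro z
    set w : ↥W' := S.symm z with hw
    have hwY : (w : E) ∈ Y.1 := hWY w.2
    set u : ↥Z' := T.symm ⟨(w : E), hwY⟩ with hu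
    have hufL : fL u ∈ W' := by
      have : Tc u = ⟨(w : E), hwY⟩ := T.apply_symm_apply _
      simp only [hfL, ContinuousLinearMap.comp_apply, this]
      exact w.2
    have huZ'' : (u : E) ∈ Z'' := ⟨u, hufL, rfl⟩
    refine ⟨⟨(u : E), huZ''⟩, ?_⟩
    have hju : j ⟨(u : E), huZ''⟩ = u := Subtype.ext rfl
    have hkv : k ⟨(u : E), huZ''⟩ = w := by
      apply Subtype.ext
      rw [hkval, hju]
      have : Tc u = ⟨(w : E), hwY⟩ := T.apply_symm_apply _
      simp [hfL, this]
    rw [hGval, hkv, hw]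
    exact S.apply_symm_apply z
  set Ge : ↥Z'' ≃ₗ[ℝ] ↥Z.1 := LinearEquiv.ofBijective G ⟨hGinj, hGsurj⟩ with hGe
  have hjnorm : ∀ x : ↥Z'', ‖j x‖ = ‖x‖ := fun x => rfl
  have hGbound : ∀ x : ↥Z'', ‖Ge x‖ ≤ (‖Sc‖ * C) * ‖x‖ := by
    intro x
    have h1 : Ge x = Sc (k x) := rfl
    have h2 : ‖Sc (k x)‖ ≤ ‖Sc‖ * ‖k x‖ := Sc.le_opNorm _
    have h3 : ‖k x‖ = ‖fL (j x)‖ := by rw [Submodule.coe_norm, hkval]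
    have h4 : ‖fL (j x)‖ ≤ C * ‖j x‖ := fL.le_opNorm _
    rw [h1, hjnorm] at *
    calc ‖Sc (k x)‖ ≤ ‖Sc‖ * ‖k x‖ := h2
      _ = ‖Sc‖ * ‖fL (j x)‖ := by rw [h3]
      _ ≤ ‖Sc‖ * (C * ‖x‖) := by
          refine mul_le_mul_of_nonneg_left ?_ (hSc ▸ ContinuousLinearMap.opNorm_nonneg Sc)
          rw [← hjnorm x]; exact h4
      _ = (‖Sc‖ * C) * ‖x‖ := by ring
  set Tsc : ↥Y.1 →L[ℝ] ↥Z' := (T.symm : ↥Y.1 →L[ℝ] ↥Z') with hTsc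
  set Ssc : ↥Z.1 →L[ℝ] ↥W' := (S.symm : ↥Z.1 →L[ℝ] ↥W') with hSsc
  have hGsbound : ∀ z : ↥Z.1, ‖Ge.symm z‖ ≤ (‖Tsc‖ * ‖Ssc‖) * ‖z‖ := by
    intro z
    set x : ↥Z'' := Ge.symm z with hx
    have hz : Ge x = z := Ge.apply_symm_apply z
    have hkx : k x = S.symm z := by
      apply S.injective
      rw [S.apply_symm_apply]
      exact hz
    have h1 : ‖x‖ = ‖j x‖ := rfl
    have h2 : j x = T.symm (T (j x)) := (T.symm_apply_apply _).symm
    have h3 : ‖j x‖ ≤ ‖Tsc‖ * ‖T (j x)‖ := by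
      conv_lhs => rw [h2]
      exact Tsc.le_opNorm _
    have h4 : ‖T (j x)‖ = ‖k x‖ := by
      rw [Submodule.coe_norm, Submodule.coe_norm, hkval]
      rfl
    have h5 : ‖k x‖ ≤ ‖Ssc‖ * ‖z‖ := by rw [hkx]; exact Ssc.le_opNorm _
    calc ‖x‖ = ‖j x‖ := h1
      _ ≤ ‖Tsc‖ * ‖T (j x)‖ := h3
      _ = ‖Tsc‖ * ‖k x‖ := by rw [h4]
      _ ≤ ‖Tsc‖ * (‖Ssc‖ * ‖z‖) := by
          exact mul_le_mul_of_nonneg_left h5 (hTsc ▸ ContinuousLinearMap.opNorm_nonneg Tsc)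
      _ = (‖Tsc‖ * ‖Ssc‖) * ‖z‖ := by ring
  set U : ↥Z'' ≃L[ℝ] ↥Z.1 :=
    Ge.toContinuousLinearEquivOfBounds (‖Sc‖ * C) (‖Tsc‖ * ‖Ssc‖) hGbound hGsbound with hU
  refine ⟨Z'', hZ''c, hF0Z'', le_trans hZ''Z' hZY0, U, ?_⟩
  have hbound : ‖Z.1.subtypeL.comp (U : ↥Z'' →L[ℝ] ↥Z.1) - Z''.subtypeL‖ ≤ η * C + δ := by
    apply ContinuousLinearMap.opNorm_le_bound _ (add_nonneg (mul_nonneg hη0 hC0) hδ0)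
    intro x
    have hUx : ((U x : ↥Z.1) : E) = ((S (k x) : ↥Z.1) : E) := rfl
    have lhs_eq : (Z.1.subtypeL.comp (U : ↥Z'' →L[ℝ] ↥Z.1) - Z''.subtypeL) x
        = ((S (k x) : ↥Z.1) : E) - (x : E) := by
      simp only [ContinuousLinearMap.sub_apply, ContinuousLinearMap.comp_apply,
        Submodule.subtypeL_apply, ContinuousLinearEquiv.coe_coe]
      rw [hUx]
    rw [lhs_eq]
    have split : ((S (k x) : ↥Z.1) : E) - (x : E)
        = (((S (k x) : ↥Z.1) : E) - (k x : E)) + ((k x : E) - (x : E)) :=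
      (sub_add_sub_cancel _ _ _).symm
    rw [split]
    have t1 : ‖((S (k x) : ↥Z.1) : E) - (k x : E)‖ ≤ η * (C * ‖x‖) := by
      have e1 : ((S (k x) : ↥Z.1) : E) - (k x : E)
          = (Z.1.subtypeL.comp Sc - W'.subtypeL) (k x) := by
        simp only [ContinuousLinearMap.sub_apply, ContinuousLinearMap.comp_apply,
          Submodule.subtypeL_apply, ContinuousLinearEquiv.coe_coe]
        rw [hSc]; rfl
      rw [e1]
      have := (Z.1.subtypeL.comp Sc - W'.subtypeL).le_opNorm (k x)
      have hkx : ‖k x‖ ≤ C * ‖x‖ := by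
        rw [Submodule.coe_norm, hkval]
        calc ‖fL (j x)‖ ≤ C * ‖j x‖ := fL.le_opNorm _
          _ = C * ‖x‖ := by rw [hjnorm]
      calc ‖(Z.1.subtypeL.comp Sc - W'.subtypeL) (k x)‖ ≤ η * ‖k x‖ := this
        _ ≤ η * (C * ‖x‖) := mul_le_mul_of_nonneg_left hkx hη0
    have t2 : ‖(k x : E) - (x : E)‖ ≤ δ * ‖x‖ := by
      have e2 : (k x : E) - (x : E) = (Y.1.subtypeL.comp Tc - Z'.subtypeL) (j x) := by
        simp only [ContinuousLinearMap.sub_apply, ContinuousLinearMap.comp_apply,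
          Submodule.subtypeL_apply]
        rw [hkval]
        rfl
      rw [e2]
      have := (Y.1.subtypeL.comp Tc - Z'.subtypeL).le_opNorm (j x)
      rw [hjnorm] at this
      exact this
    calc ‖(((S (k x) : ↥Z.1) : E) - (k x : E)) + ((k x : E) - (x : E))‖
        ≤ ‖((S (k x) : ↥Z.1) : E) - (k x : E)‖ + ‖(k x : E) - (x : E)‖ := norm_add_le _ _
      _ ≤ η * (C * ‖x‖) + δ * ‖x‖ := add_le_add t1 t2
      _ = (η * C + δ) * ‖x‖ := by ring
  have hlt : η * C + δ < ε0 := by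
    have h1 : η * C ≤ ε * C := mul_le_mul_of_nonneg_right (le_of_lt hηε) hC0
    have h2 : ε * (C + 1) = ε0 - δ := by
      rw [hε]; field_simp
    nlinarith
  exact lt_of_le_of_lt hbound hlt

theorem statement3 (E : Type) [NormedAddCommGroup E] [NormedSpace ℝ E] [CompleteSpace E] :
    (@TopologicalSpace.IsTopologicalBasis (ClosedSub E) (ellTop E) (ellBasis E)) ∧
    ∀ (Y : ClosedSub E) (S : Set (ClosedSub E)),
      S ∈ @nhds _ (ellTop E) Y ↔
        ∃ (F : Submodule ℝ E) (ε : ℝ), FiniteDimensional ℝ F ∧ F ≤ Y.1 ∧ 0 < ε ∧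
          ellSet E F Y.1 ε ⊆ S := by
  letI : TopologicalSpace (ClosedSub E) := ellTop E
  have key : ∀ u : Set (ClosedSub E), TopologicalSpace.GenerateOpen (ellBasis E) u →
      ∀ a ∈ u, ∃ (F : Submodule ℝ E) (ε : ℝ), FiniteDimensional ℝ F ∧ F ≤ a.1 ∧ 0 < ε ∧
        ellSet E F a.1 ε ⊆ u := by
    intro u hu
    induction hu with
    | basic s hs =>
      intro a ha
      obtain ⟨F0, Y0, ε0, hfd, _, _, _, rfl⟩ := hs
      exact ell_refine hfd a ha
    | univ =>
      intro a _
      exact ⟨⊥, 1, inferInstance, bot_le, one_pos, fun _ _ => trivial⟩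
    | inter u v _ _ ihu ihv =>
      intro a ha
      obtain ⟨F1, ε1, hfd1, hle1, hε1, hsub1⟩ := ihu a ha.1
      obtain ⟨F2, ε2, hfd2, hle2, hε2, hsub2⟩ := ihv a ha.2
      haveI := hfd1; haveI := hfd2
      refine ⟨F1 ⊔ F2, min ε1 ε2, inferInstance, sup_le hle1 hle2, lt_min hε1 hε2, ?_⟩
      intro Z hZ
      exact ⟨hsub1 (ellSet_mono le_sup_left (min_le_left _ _) hZ),
        hsub2 (ellSet_mono le_sup_right (min_le_right _ _) hZ)⟩
    | sUnion S _ ih =>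
      intro a ha
      obtain ⟨t, htS, hat⟩ := ha
      obtain ⟨F, ε, hfd, hle, hε, hsub⟩ := ih t htS a hat
      exact ⟨F, ε, hfd, hle, hε, hsub.trans (Set.subset_sUnion_of_mem htS)⟩
  have hbasis : @TopologicalSpace.IsTopologicalBasis (ClosedSub E) (ellTop E) (ellBasis E) := by
    refine TopologicalSpace.isTopologicalBasis_of_isOpen_of_nhds ?_ ?_
    · intro u hu
      exact TopologicalSpace.isOpen_generateFrom_of_mem hu
    · intro a u ha hu
      obtain ⟨F, ε, hfd, hle, hε, hsub⟩ := key u hu a ha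
      exact ⟨ellSet E F a.1 ε, ⟨F, a.1, ε, hfd, a.2, hle, hε, rfl⟩,
        mem_ellSet_self a F hle hε, hsub⟩
  refine ⟨hbasis, fun Y S => ?_⟩
  rw [hbasis.mem_nhds_iff]
  constructor
  · rintro ⟨t, ht, hYt, htS⟩
    obtain ⟨F0, Y0, ε0, hfd, _, _, _, rfl⟩ := ht
    obtain ⟨F, ε, hfd', hle, hε, hsub⟩ := ell_refine hfd Y hYt
    exact ⟨F, ε, hfd', hle, hε, hsub.trans htS⟩
  · rintro ⟨F, ε, hfd, hle, hε, hsub⟩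
    exact ⟨ellSet E F Y.1 ε, ⟨F, Y.1, ε, hfd, Y.2, hle, hε, rfl⟩,
      mem_ellSet_self Y F hle hε, hsub⟩
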